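/- arXiv:0803.3550 — 4 statements merged into one kernel-verified Lean document; each statement's English description precedes it below -/
import Mathlib

section
/- Let P(x) be a formal power series over ℚ with P(0) = 1 such that P is a polynomial of degree u > 0 (i.e., P ≠ 1 has finitely many nonzero coefficients, the top one in degree u). Then the logarithmic derivative P'(x)/P(x), viewed as a formal power series, has infinitely many nonzero coefficients. -/
/-- Let `P` be a polynomial over `ℚ` with constant term `1` and degree `u > 0`.
Then the logarithmic derivative `P'/P`, viewed as a formal power series,
has infinitely many nonzero coefficients. -/
theorem logDeriv_proper (P : Polynomial ℚ) (u : ℕ) (hu : 0 < u)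
    (hdeg : P.natDegree = u) (h0 : P.coeff 0 = 1) :
    {i : ℕ | PowerSeries.coeff (R := ℚ) i
        ((↑(Polynomial.derivative P) : PowerSeries ℚ) * (↑P : PowerSeries ℚ)⁻¹) ≠ 0}.Infinite := by
  by_contra hfin
  rw [Set.not_infinite] at hfin
  set f := (↑(Polynomial.derivative P) : PowerSeries ℚ) * (↑P : PowerSeries ℚ)⁻¹ with hf
  have hPne : P ≠ 0 := fun h => by simp [h] at h0
  have hc : PowerSeries.constantCoeff (R := ℚ) (↑P : PowerSeries ℚ) ≠ 0 := by
    have : PowerSeries.constantCoeff (R := ℚ) (↑P : PowerSeries ℚ) = P.coeff 0 := by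
      rw [← Polynomial.coeff_coe P 0]; simp [PowerSeries.coeff_zero_eq_constantCoeff]
    rw [this, h0]; exact one_ne_zero
  have hmul : f * ↑P = (↑(Polynomial.derivative P) : PowerSeries ℚ) := by
    rw [hf, mul_assoc, PowerSeries.inv_mul_cancel _ hc, mul_one]
  have hP'ne : (Polynomial.derivative P) ≠ 0 := by
    intro h
    have := Polynomial.natDegree_eq_zero_of_derivative_eq_zero h
    omega
  have hfne : f ≠ 0 := by
    intro h
    rw [h, zero_mul] at hmul
    exact hP'ne (by exact_mod_cast hmul.symm)
  have hne : hfin.toFinset.Nonempty := by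
    rw [Set.Finite.toFinset_nonempty]
    by_contra h
    rw [Set.not_nonempty_iff_eq_empty] at h
    apply hfne
    ext n
    have : n ∉ ({i : ℕ | PowerSeries.coeff (R := ℚ) i f ≠ 0} : Set ℕ) := by rw [h]; exact Set.notMem_empty n
    simpa using this
  set k := hfin.toFinset.max' hne with hk
  have hkmem : k ∈ hfin.toFinset := hfin.toFinset.max'_mem hne
  have hkne : PowerSeries.coeff (R := ℚ) k f ≠ 0 := by
    have := hfin.mem_toFinset.mp hkmem
    simpa using this
  have hmax : ∀ i, k < i → PowerSeries.coeff (R := ℚ) i f = 0 := by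
    intro i hi
    by_contra h
    have : i ∈ hfin.toFinset := hfin.mem_toFinset.mpr (by simpa using h)
    exact absurd (hfin.toFinset.le_max' i this) (not_le.mpr hi)
  have key : PowerSeries.coeff (R := ℚ) (k + u) (f * ↑P) = PowerSeries.coeff (R := ℚ) k f * P.coeff u := by
    rw [PowerSeries.coeff_mul]
    rw [Finset.sum_eq_single (k, u)]
    · simp [Polynomial.coeff_coe]
    · rintro ⟨a, b⟩ hab hne'
      rw [Finset.HasAntidiagonal.mem_antidiagonal] at hab
      simp only
      rcases lt_trichotomy a k with h1 | h1 | h1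
      · have : u < b := by omega
        rw [Polynomial.coeff_coe, Polynomial.coeff_eq_zero_of_natDegree_lt (by omega), mul_zero]
      · exfalso; apply hne'; subst h1; simp at hab ⊢; omega
      · rw [hmax a h1, zero_mul]
    · intro h; exact absurd (Finset.HasAntidiagonal.mem_antidiagonal.mpr (rfl : (k, u).1 + (k, u).2 = k + u)) h
  rw [hmul] at key
  have hrhs : PowerSeries.coeff (R := ℚ) (k + u) (↑(Polynomial.derivative P) : PowerSeries ℚ) = 0 := by
    rw [Polynomial.coeff_coe]
    apply Polynomial.coeff_eq_zero_of_natDegree_lt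
    have := Polynomial.natDegree_derivative_le P
    omega
  rw [hrhs] at key
  have hlead : P.coeff u ≠ 0 := by
    rw [← hdeg]
    exact Polynomial.leadingCoeff_ne_zero.mpr hPne
  exact hlead (by
    rcases mul_eq_zero.mp key.symm with h | h
    · exact absurd h hkne
    · exact h)
end

section
/- Let a : ℕ → ℤ be a function with a_d = 0 for all d > v (where v ≥ 1), and define f(m) = ∑_{d ∣ m} a_d · d · θ(m/d), where θ(n) = ∑_{e ∣ n} e·μ(e). Then for every pair of positive integers s, t, there exists a positive integer N such that 2^t divides f(N+i) for all 1 ≤ i ≤ s. -/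
/-- `θ(n) = ∑_{e ∣ n} e · μ(e)`, where `μ` is the Möbius function. -/
def theta (n : ℕ) : ℤ :=
  ∑ e ∈ n.divisors, (e : ℤ) * ArithmeticFunction.moebius e

/-- `f(m) = ∑_{d ∣ m} a_d · d · θ(m/d)`. -/
def convTheta (a : ℕ → ℤ) (m : ℕ) : ℤ :=
  ∑ d ∈ m.divisors, a d * d * theta (m / d)

open Finset ArithmeticFunction

lemma squarefree_prod_primes {s : Finset ℕ} (hs : ∀ p ∈ s, p.Prime) :
    Squarefree (∏ p ∈ s, p) := by
  classical
  induction s using Finset.induction with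
  | empty => simpa using squarefree_one
  | @insert q s hq ih =>
    rw [Finset.prod_insert hq]
    have hqp : q.Prime := hs q (Finset.mem_insert_self _ _)
    have hcop : Nat.Coprime q (∏ p ∈ s, p) := by
      apply Nat.Coprime.prod_right
      intro p hp
      exact (Nat.coprime_primes hqp (hs p (Finset.mem_insert_of_mem hp))).mpr
        (fun h => hq (h ▸ hp))
    exact (Nat.squarefree_mul hcop).mpr
      ⟨hqp.prime.squarefree, ih fun p hp => hs p (Finset.mem_insert_of_mem hp)⟩

lemma theta_squarefree {n : ℕ} (hn : Squarefree n) :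
    theta n = ∏ p ∈ n.primeFactors, (1 - (p : ℤ)) := by
  have h := IsMultiplicative.prodPrimeFactors_one_sub_of_squarefree
    (↑(ArithmeticFunction.id) : ArithmeticFunction ℤ) isMultiplicative_id.natCast hn
  simp only [natCoe_apply, ArithmeticFunction.id_apply] at h
  rw [h]
  unfold theta
  apply Finset.sum_congr rfl
  intro d _
  push_cast
  ring

lemma theta_eq_prod {n : ℕ} (hn : n ≠ 0) :
    theta n = ∏ p ∈ n.primeFactors, (1 - (p : ℤ)) := by
  classical
  set r := ∏ p ∈ n.primeFactors, p with hr
  have hprimes : ∀ p ∈ n.primeFactors, p.Prime := fun p hp => Nat.prime_of_mem_primeFactors hp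
  have hsq : Squarefree r := squarefree_prod_primes hprimes
  have hrf : r.primeFactors = n.primeFactors := Nat.primeFactors_prod hprimes
  have hmoeb : ∀ m : ℕ, ∀ d ∈ m.divisors,
      (d : ℤ) * ArithmeticFunction.moebius d ≠ 0 → Squarefree d := by
    intro m d _ hne
    by_contra hsf
    exact hne (by rw [moebius_eq_zero_of_not_squarefree hsf]; simp)
  have hset : Finset.filter (fun d => Squarefree d) n.divisors
      = Finset.filter (fun d => Squarefree d) r.divisors := by
    ext d
    simp only [Finset.mem_filter, Nat.mem_divisors]
    constructor
    · rintro ⟨⟨hdn, -⟩, hd⟩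
      refine ⟨⟨?_, hsq.ne_zero⟩, hd⟩
      have h1 : d = ∏ p ∈ d.primeFactors, p := (Nat.prod_primeFactors_of_squarefree hd).symm
      rw [h1]
      exact Finset.prod_dvd_prod_of_subset _ _ _ (Nat.primeFactors_mono hdn hn)
    · rintro ⟨⟨hdr, -⟩, hd⟩
      exact ⟨⟨dvd_trans hdr (Nat.prod_primeFactors_dvd n), hn⟩, hd⟩
  have key : theta n = theta r := by
    unfold theta
    rw [← Finset.sum_filter_of_ne (hmoeb n), ← Finset.sum_filter_of_ne (hmoeb r), hset]
  rw [key, theta_squarefree hsq, hrf]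

lemma sub_one_dvd_theta {n p : ℕ} (hn : n ≠ 0) (hp : p.Prime) (hpn : p ∣ n) :
    (1 - (p : ℤ)) ∣ theta n := by
  rw [theta_eq_prod hn]
  exact Finset.dvd_prod_of_mem _ (Nat.mem_primeFactors.mpr ⟨hp, hpn, hn⟩)

lemma exists_good_N (v t : ℕ) (ht : t ≠ 0) (s : ℕ) :
    ∃ N M : ℕ, 0 < N ∧ 0 < M ∧ ∀ i, 1 ≤ i → i ≤ s →
      ∃ p : ℕ, p.Prime ∧ v < p ∧ p ≡ 1 [MOD 2 ^ t] ∧ p ∣ (N + i) ∧ p ∣ M := by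
  induction s with
  | zero => exact ⟨1, 1, one_pos, one_pos, fun i h1 h0 => absurd (h1.trans h0) (by simp)⟩
  | succ s ih =>
    obtain ⟨N, M, hN, hM, h⟩ := ih
    obtain ⟨p, hp, hgt, hmod⟩ := Nat.exists_prime_gt_modEq_one (k := 2 ^ t) (max v M)
      (pow_ne_zero _ two_ne_zero)
    have hpv : v < p := lt_of_le_of_lt (le_max_left _ _) hgt
    have hpM : ¬ (p ∣ M) := fun hd =>
      absurd (Nat.le_of_dvd hM hd) (not_le.mpr (lt_of_le_of_lt (le_max_right _ _) hgt))
    haveI : Fact p.Prime := ⟨hp⟩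
    have hMu : (M : ZMod p) ≠ 0 := by
      rwa [Ne, ZMod.natCast_eq_zero_iff]
    set x : ZMod p := (-(N + s + 1 : ℕ)) * (M : ZMod p)⁻¹ with hx
    set k : ℕ := x.val with hk
    refine ⟨N + k * M, M * p, Nat.lt_of_lt_of_le hN (Nat.le_add_right _ _), Nat.mul_pos hM hp.pos, ?_⟩
    intro i h1 hi
    rcases Nat.lt_or_ge i (s + 1) with hlt | hge
    · obtain ⟨q, hq, hqv, hqmod, hqdvd, hqM⟩ := h i h1 (Nat.lt_succ_iff.mp hlt)
      refine ⟨q, hq, hqv, hqmod, ?_, hqM.mul_right _⟩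
      have : N + k * M + i = (N + i) + k * M := by ring
      rw [this]
      exact Nat.dvd_add hqdvd (hqM.mul_left _)
    · have hi' : i = s + 1 := le_antisymm hi hge
      subst hi'
      refine ⟨p, hp, hpv, hmod, ?_, Dvd.intro_left _ rfl⟩
      rw [← ZMod.natCast_eq_zero_iff]
      push_cast
      rw [hk, ZMod.natCast_zmod_val, hx]
      field_simp
      push_cast
      ring

/-- Let `a : ℕ → ℤ` with `a_d = 0` for all `d > v` (`v ≥ 1`), and let
`f(m) = ∑_{d ∣ m} a_d · d · θ(m/d)`. Then for every pair of positive integers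
`s, t`, there exists a positive integer `N` such that `2^t ∣ f(N+i)` for all
`1 ≤ i ≤ s`. -/
theorem convTheta_two_pow_dvd (v : ℕ) (hv : 1 ≤ v) (a : ℕ → ℤ)
    (ha : ∀ d, v < d → a d = 0) (s t : ℕ) (hs : 0 < s) (ht : 0 < t) :
    ∃ N : ℕ, 0 < N ∧ ∀ i, 1 ≤ i → i ≤ s → (2 : ℤ) ^ t ∣ convTheta a (N + i) := by
  obtain ⟨N, M, hN, hM, h⟩ := exists_good_N v t ht.ne' s
  refine ⟨N, hN, ?_⟩
  intro i h1 hi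
  obtain ⟨p, hp, hpv, hpmod, hpdvd, -⟩ := h i h1 hi
  set m := N + i with hm
  have hm0 : m ≠ 0 := by positivity
  unfold convTheta
  apply Finset.dvd_sum
  intro d hd
  rw [Nat.mem_divisors] at hd
  rcases le_or_gt d v with hdv | hdv
  · -- d ≤ v < p, so p ∤ d, hence p ∣ m / d
    have hpd : ¬ (p ∣ d) := by
      intro hc
      have hd0 : d ≠ 0 := fun h0 => by
        subst h0
        exact hm0 (Nat.eq_zero_of_zero_dvd hd.1)
      exact absurd (Nat.le_of_dvd (Nat.pos_of_ne_zero hd0) hc)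
        (not_le.mpr (lt_of_le_of_lt hdv hpv))
    have hdm : d ∣ m := hd.1
    have hmd : m / d * d = m := Nat.div_mul_cancel hdm
    have hpmd : p ∣ m / d := by
      rcases (Nat.Prime.dvd_mul hp).mp (hmd ▸ hpdvd) with h' | h'
      · exact h'
      · exact absurd h' hpd
    have hmd0 : m / d ≠ 0 := by
      intro h0
      rw [h0, zero_mul] at hmd
      exact hm0 hmd.symm
    have h2 : (2 : ℤ) ^ t ∣ (1 - (p : ℤ)) := by
      have h3 : ((2 ^ t : ℕ) : ℤ) ∣ ((1 : ℕ) : ℤ) - ((p : ℕ) : ℤ) := Nat.ModEq.dvd hpmod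
      push_cast at h3
      exact_mod_cast h3
    exact Dvd.dvd.mul_left (h2.trans (sub_one_dvd_theta hmd0 hp hpmd)) _
  · rw [ha d hdv]
    simp
end

section
/- Let a : ℕ → ℤ with a_d = 0 for d > v, let l ≥ 1 be minimal with a_l ≠ 0, and let p > v be a prime. Define f(m) = ∑_{d ∣ m} a_d · d · θ(m/d) with θ(n) = ∑_{e ∣ n} e·μ(e). Then f(l·p^i) = a_l · l · (1 − p) for every i ≥ 1; in particular f(l·p^i) ≠ 0 and is independent of i. -/
lemma theta_prime_pow (p : ℕ) (hp : p.Prime) (i : ℕ) (hi : 1 ≤ i) :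
    theta (p ^ i) = 1 - (p : ℤ) := by
  unfold theta
  rw [Nat.sum_divisors_prime_pow hp]
  induction i with
  | zero => omega
  | succ n ih =>
    rcases Nat.eq_or_lt_of_le hi with h | h
    · have : n = 0 := by omega
      subst this
      simp [Finset.sum_range_succ, ArithmeticFunction.moebius_apply_prime hp]
      ring
    · have hn : 1 ≤ n := by omega
      rw [Finset.sum_range_succ, ih hn,
        ArithmeticFunction.moebius_apply_prime_pow hp (by omega)]
      have : ¬ (n + 1 = 1) := by omega
      simp [this]
      intro h0; omega

/-- Let `a : ℕ → ℤ` with `a_d = 0` for `d > v`, let `l ≥ 1` be minimal with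
`a_l ≠ 0`, and let `p > v` be a prime. Then `f(l·p^i) = a_l · l · (1 − p)` for
every `i ≥ 1`; in particular `f(l·p^i) ≠ 0` and is independent of `i`. -/
theorem convTheta_at_l_pow (v : ℕ) (a : ℕ → ℤ) (ha : ∀ d, v < d → a d = 0)
    (l : ℕ) (hl : 1 ≤ l) (hal : a l ≠ 0) (hmin : ∀ d, 0 < d → d < l → a d = 0)
    (p : ℕ) (hp : p.Prime) (hpv : v < p) (i : ℕ) (hi : 1 ≤ i) :
    convTheta a (l * p ^ i) = a l * l * (1 - (p : ℤ)) ∧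
      convTheta a (l * p ^ i) ≠ 0 := by
  have hlv : l ≤ v := by
    by_contra h
    exact hal (ha l (by omega))
  have hm0 : l * p ^ i ≠ 0 := Nat.mul_ne_zero (by omega) (pow_ne_zero _ hp.ne_zero)
  have hmain : convTheta a (l * p ^ i) = a l * l * (1 - (p : ℤ)) := by
    unfold convTheta
    rw [Finset.sum_eq_single_of_mem l
      (Nat.mem_divisors.mpr ⟨dvd_mul_right l (p ^ i), hm0⟩)]
    · rw [Nat.mul_div_cancel_left _ (by omega), theta_prime_pow p hp i hi]
    · intro d hd hdl
      have hdvd : d ∣ l * p ^ i := (Nat.mem_divisors.mp hd).1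
      have hd0 : 0 < d := Nat.pos_of_mem_divisors hd
      rcases le_or_gt d v with hdv | hdv
      · have hpd : ¬ p ∣ d := fun h => by
          have := Nat.le_of_dvd hd0 h; omega
        have hcop : Nat.Coprime d (p ^ i) :=
          Nat.Coprime.pow_right i ((hp.coprime_iff_not_dvd.mpr hpd).symm)
        have hdl' : d ∣ l := hcop.dvd_of_dvd_mul_right hdvd
        have : d < l := lt_of_le_of_ne (Nat.le_of_dvd (by omega) hdl') hdl
        rw [hmin d hd0 this]; ring
      · rw [ha d hdv]; ring
  refine ⟨hmain, ?_⟩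
  rw [hmain]
  have : (1 : ℤ) - p ≠ 0 := by
    have := hp.two_le
    omega
  have hl0 : (l : ℤ) ≠ 0 := by exact_mod_cast (by omega : l ≠ 0)
  exact mul_ne_zero (mul_ne_zero hal hl0) this
end

section
/- Möbius inversion for the graded Euler characteristic: if g(x) = ∑_{m=1}^∞ h(x^m) · (∑_{d ∣ m} μ(d)/d) as formal power series over ℚ with h(0) = 0, then h(x) = ∑_{m=1}^∞ g(x^m) · (∑_{d ∣ m} d·μ(d)/m). -/
open PowerSeries ArithmeticFunction

namespace MoebiusInvAux

open Finset
open scoped ArithmeticFunction.Moebius ArithmeticFunction.zeta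

/-- pointwise multiplication by a "completely multiplicative" weight distributes
over Dirichlet convolution. -/
lemma pmul_mul_pmul (χ f g : ArithmeticFunction ℚ)
    (hχ : ∀ a b : ℕ, χ (a * b) = χ a * χ b) :
    χ.pmul f * χ.pmul g = χ.pmul (f * g) := by
  ext n
  rw [mul_apply, pmul_apply, mul_apply, Finset.mul_sum]
  refine Finset.sum_congr rfl ?_
  rintro ⟨a, b⟩ hab
  obtain ⟨h1, h2⟩ := Nat.mem_divisorsAntidiagonal.mp hab
  simp only [pmul_apply, ← h1, hχ a b]
  ring

/-- the weight `n ↦ (n : ℚ)⁻¹`. -/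
noncomputable def invQ : ArithmeticFunction ℚ := ⟨fun n => (n : ℚ)⁻¹, by simp⟩

@[simp] lemma invQ_apply (n : ℕ) : invQ n = (n : ℚ)⁻¹ := rfl

lemma invQ_mul (a b : ℕ) : invQ (a * b) = invQ a * invQ b := by
  simp only [invQ_apply, Nat.cast_mul, mul_inv]

/-- the weight `n ↦ (n : ℚ)`. -/
noncomputable def idQ : ArithmeticFunction ℚ := ⟨fun n => (n : ℚ), by simp⟩

@[simp] lemma idQ_apply (n : ℕ) : idQ n = (n : ℚ) := rfl

lemma idQ_mul (a b : ℕ) : idQ (a * b) = idQ a * idQ b := by simp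

/-- the arithmetic function `m ↦ ∑_{d ∣ m} μ(d)/d`. -/
noncomputable def A : ArithmeticFunction ℚ := invQ.pmul ((μ : ArithmeticFunction ℚ) * idQ)

/-- the arithmetic function `m ↦ ∑_{d ∣ m} d·μ(d)/m`. -/
noncomputable def B : ArithmeticFunction ℚ :=
  invQ.pmul (idQ.pmul (μ : ArithmeticFunction ℚ) * (ζ : ArithmeticFunction ℚ))

lemma A_apply (m : ℕ) : A m = ∑ d ∈ m.divisors, (moebius d : ℚ) / d := by
  rcases Nat.eq_zero_or_pos m with rfl | hm
  · simp [A]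
  rw [A, pmul_apply, mul_apply, Nat.sum_divisorsAntidiagonal
      (fun a b => ((μ : ArithmeticFunction ℚ) a) * idQ b), Finset.mul_sum]
  refine Finset.sum_congr rfl fun d hd => ?_
  obtain ⟨hdvd, hm0⟩ := Nat.mem_divisors.mp hd
  have hd0 : (d : ℚ) ≠ 0 := Nat.cast_ne_zero.mpr fun h => hm0 (by simpa [h] using hdvd)
  have hm0' : (m : ℚ) ≠ 0 := Nat.cast_ne_zero.mpr hm0
  rw [invQ_apply, idQ_apply, intCoe_apply, Nat.cast_div hdvd (Nat.cast_ne_zero.mpr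
    fun h => hm0 (by simpa [h] using hdvd))]
  field_simp

lemma B_apply (m : ℕ) : B m = ∑ d ∈ m.divisors, (d : ℚ) * (moebius d : ℚ) / m := by
  rcases Nat.eq_zero_or_pos m with rfl | hm
  · simp [B]
  rw [B, pmul_apply, mul_apply, Nat.sum_divisorsAntidiagonal
      (fun a b => (idQ.pmul (μ : ArithmeticFunction ℚ)) a * (ζ : ArithmeticFunction ℚ) b),
    Finset.mul_sum]
  refine Finset.sum_congr rfl fun d hd => ?_
  obtain ⟨hdvd, hm0⟩ := Nat.mem_divisors.mp hd
  have hq : m / d ≠ 0 := Nat.div_ne_zero_iff_of_dvd hdvd |>.mpr ⟨hm0, fun h => hm0 (by simpa [h] using hdvd)⟩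
  rw [pmul_apply, idQ_apply, intCoe_apply, natCoe_apply, zeta_apply_ne hq, invQ_apply]
  ring

lemma idQ_pmul_one : idQ.pmul (1 : ArithmeticFunction ℚ) = 1 := by
  ext n
  rcases eq_or_ne n 1 with rfl | hn
  · simp
  · simp [one_apply, hn]

lemma invQ_pmul_one : invQ.pmul (1 : ArithmeticFunction ℚ) = 1 := by
  ext n
  rcases eq_or_ne n 1 with rfl | hn
  · simp
  · simp [one_apply, hn]

lemma idQ_eq_pmul_zeta : idQ = idQ.pmul (ζ : ArithmeticFunction ℚ) := by
  ext n
  rcases eq_or_ne n 0 with rfl | hn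
  · simp
  · simp [zeta_apply_ne hn]

lemma A_mul_B : A * B = 1 := by
  have key : idQ * idQ.pmul (μ : ArithmeticFunction ℚ) = 1 := by
    nth_rewrite 1 [idQ_eq_pmul_zeta]
    rw [pmul_mul_pmul idQ _ _ idQ_mul, coe_zeta_mul_coe_moebius,
      idQ_pmul_one]
  rw [A, B, pmul_mul_pmul invQ _ _ invQ_mul]
  have : (μ : ArithmeticFunction ℚ) * idQ * (idQ.pmul (μ : ArithmeticFunction ℚ)
      * (ζ : ArithmeticFunction ℚ)) =
      ((μ : ArithmeticFunction ℚ) * (ζ : ArithmeticFunction ℚ))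
      * (idQ * idQ.pmul (μ : ArithmeticFunction ℚ)) := by ring
  rw [this, key, coe_moebius_mul_coe_zeta, one_mul, invQ_pmul_one]

end MoebiusInvAux

/-- Möbius inversion for the graded Euler characteristic: if
`g(x) = ∑_{m=1}^∞ h(x^m) · (∑_{d ∣ m} μ(d)/d)` as formal power series over `ℚ`
with `h(0) = 0` (stated coefficientwise: the coefficient of `x^n` in `h(x^m)`
is `h_{n/m}` when `m ∣ n` and `0` otherwise), then
`h(x) = ∑_{m=1}^∞ g(x^m) · (∑_{d ∣ m} d·μ(d)/m)`. -/
theorem moebius_inversion_power_series (g h : PowerSeries ℚ)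
    (hg0 : constantCoeff g = 0) (hh0 : constantCoeff h = 0)
    (hgh : ∀ n : ℕ, 0 < n →
      coeff n g = ∑ m ∈ n.divisors,
        (∑ d ∈ m.divisors, (moebius d : ℚ) / d) * coeff (n / m) h) :
    ∀ n : ℕ, 0 < n →
      coeff n h = ∑ m ∈ n.divisors,
        (∑ d ∈ m.divisors, (d : ℚ) * (moebius d : ℚ) / m) * coeff (n / m) g := by
  open MoebiusInvAux in
  intro n hn
  set H : ArithmeticFunction ℚ := ⟨fun k => coeff k h, by simpa using hh0⟩ with hH
  set G : ArithmeticFunction ℚ := ⟨fun k => coeff k g, by simpa using hg0⟩ with hG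
  have hHk : ∀ k, H k = coeff k h := fun k => rfl
  have hGk : ∀ k, G k = coeff k g := fun k => rfl
  have hGA : G = A * H := by
    ext k
    rcases Nat.eq_zero_or_pos k with rfl | hk
    · simp
    · rw [hGk, hgh k hk, mul_apply,
        Nat.sum_divisorsAntidiagonal (fun a b => A a * H b)]
      exact Finset.sum_congr rfl fun m _ => by rw [A_apply, hHk]
  have hHB : H = B * G := by
    rw [hGA, ← mul_assoc, mul_comm B A, A_mul_B, one_mul]
  calc coeff n h = H n := (hHk n).symm
    _ = (B * G) n := by rw [hHB]
    _ = ∑ m ∈ n.divisors,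
        (∑ d ∈ m.divisors, (d : ℚ) * (moebius d : ℚ) / m) * coeff (n / m) g := by
      rw [mul_apply, Nat.sum_divisorsAntidiagonal (fun a b => B a * G b)]
      exact Finset.sum_congr rfl fun m _ => by rw [B_apply, hGk]
end
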